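/- arXiv:2412.08835 — 3 statements merged into one kernel-verified Lean document; each statement's English description precedes it below -/
import Mathlib

section
/- Every directed subgraph of a graph G can be expressed as a •-product of its directed edges: the submonoid Mod(G) of (SMult(G), •) generated by all directed subgraphs equals the submonoid generated by the single directed edges of G. -/
namespace GGNN

variable {V : Type*} (G : SimpleGraph V)

/-- A directed edge of the graph `G`: an ordered pair of adjacent vertices. -/
abbrev DEdge := {p : V × V // G.Adj p.1 p.2}

/-- `l` is a (direction-respecting) path whose edges all lie in `E`:
it is a nonempty list of directed edges of `E` in which consecutive edges are
composable. -/
def IsPathIn (E : Finset (DEdge G)) (l : List (DEdge G)) : Prop :=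
  l ≠ [] ∧ l.Chain' (fun d e => d.1.2 = e.1.1) ∧ ∀ e ∈ l, e ∈ E

/-- The path `l` starts at the vertex `v`. -/
def startsAt (l : List (DEdge G)) (v : V) : Prop :=
  ∃ e, l.head? = some e ∧ e.1.1 = v

/-- The path `l` ends at the vertex `v`. -/
def endsAt (l : List (DEdge G)) (v : V) : Prop :=
  ∃ e, l.getLast? = some e ∧ e.1.2 = v

/-- A directed subgraph of `G`: a finite set of directed edges of `G` that is
connected (as an undirected subgraph), and acyclic with at most one directed
path between any two nodes. -/
structure DirSub where
  edges : Finset (DEdge G)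
  connected : ∀ v w : V, (∃ e ∈ edges, e.1.1 = v ∨ e.1.2 = v) →
      (∃ e ∈ edges, e.1.1 = w ∨ e.1.2 = w) →
      Relation.ReflTransGen
        (fun a b => ∃ e ∈ edges, (e.1.1 = a ∧ e.1.2 = b) ∨ (e.1.1 = b ∧ e.1.2 = a)) v w
  uniquePath : ∀ (v w : V) (l₁ l₂ : List (DEdge G)),
      IsPathIn G edges l₁ → IsPathIn G edges l₂ →
      startsAt G l₁ v → startsAt G l₂ v → endsAt G l₁ w → endsAt G l₂ w → l₁ = l₂
  acyclic : ∀ (v : V) (l : List (DEdge G)),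
      IsPathIn G edges l → startsAt G l v → ¬ endsAt G l v

/-- `v ≤_D w`: there is a direction-respecting path in `D` from `v` to `w`. -/
def Reaches (D : DirSub G) (v w : V) : Prop :=
  ∃ l, IsPathIn G D.edges l ∧ startsAt G l v ∧ endsAt G l w

variable [DecidableEq V]

/-- A labelled directed edge: a directed edge of `G` together with a label
`i : ℕ` selecting a copy of it in a directed multigraph. Labels implement the
disjoint union of edge sets. -/
abbrev LEdge := DEdge G × ℕ

/-- Elements of `SMult(G)`: pairs `(M, S)` of a directed multigraph `M`
(a multiset of directed edges of `G`, with multiplicities) and a set `S` of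
paths of labelled edges. -/
abbrev SMult := Multiset (DEdge G) × Set (List (LEdge G))

/-- Relabelling of the paths of the second summand in the disjoint union
`M ⊕ N` of edge multisets: the label of a copy of `e` is shifted by the number
of copies of `e` in `M`. -/
def lshift (M : Multiset (DEdge G)) (l : List (LEdge G)) : List (LEdge G) :=
  l.map fun p => (p.1, p.2 + M.count p.1)

/-- Two (nonempty) paths are composable when the endpoint of the first is the
start point of the second. -/
def LComposable (p q : List (LEdge G)) : Prop :=
  ∃ d e, p.getLast? = some d ∧ q.head? = some e ∧ d.1.1.2 = e.1.1.1

/-- The monoid operation `(M,S) • (N,T) = (M ⊕ N, S ⋆ T)` on `SMult(G)`: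
edge multisets are merged (disjointly, via relabelling), and `S ⋆ T` is the
union of `S`, `T` and all composites of a path of `S` followed by a composable
path of `T`. -/
def smul (x y : SMult G) : SMult G :=
  (x.1 + y.1,
    x.2 ∪ (lshift G x.1 '' y.2) ∪
      {r | ∃ p ∈ x.2, ∃ q ∈ lshift G x.1 '' y.2, LComposable G p q ∧ r = p ++ q})

/-- The identity of `SMult(G)`: the empty graph with no paths. -/
def sone : SMult G := (0, ∅)

/-- `l` is a path in the directed multigraph `M`: a nonempty chain of
composable labelled edges, each of which is a copy of an edge of `M`. -/
def LIsPathIn (M : Multiset (DEdge G)) (l : List (LEdge G)) : Prop :=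
  l ≠ [] ∧ l.Chain' (fun a b => a.1.1.2 = b.1.1.1) ∧ ∀ p ∈ l, p.2 < M.count p.1

/-- A directed subgraph `D`, viewed as the element `(D, Paths(D))` of
`SMult(G)`. -/
def toSM (D : DirSub G) : SMult G :=
  (D.edges.val, {l | LIsPathIn G D.edges.val l})

/-- A single directed edge, as an element of `SMult(G)`. -/
def edgeElem (e : DEdge G) : SMult G := ({e}, {[(e, 0)]})

/-- The submonoid-as-a-set generated by `A` under the binary operation `o`
with identity `e`: all finite `o`-products of elements of `A`. -/
def GenBy {α : Type*} (A : Set α) (o : α → α → α) (e : α) : Set α :=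
  {x | ∃ l : List α, (∀ a ∈ l, a ∈ A) ∧ l.foldr o e = x}

/-- `Mod(G)`: the submonoid of `(SMult(G), •)` generated by the directed
subgraphs of `G`. -/
def ModSet : Set (SMult G) :=
  GenBy (Set.range (toSM G)) (smul G) (sone G)

/-! ### Auxiliary lemmas -/

section Aux

open scoped List

set_option linter.unusedSectionVars false

variable {G}

lemma lshift_zero (l : List (LEdge G)) : lshift G 0 l = l := by
  simp [lshift]

lemma lshift_lshift (M N : Multiset (DEdge G)) (l : List (LEdge G)) :
    lshift G M (lshift G N l) = lshift G (M + N) l := by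
  simp only [lshift, List.map_map]
  refine List.map_congr_left fun p _ => ?_
  simp [Function.comp, Multiset.count_add]; ring

lemma lshift_append (M : Multiset (DEdge G)) (l₁ l₂ : List (LEdge G)) :
    lshift G M (l₁ ++ l₂) = lshift G M l₁ ++ lshift G M l₂ := by
  simp [lshift]

lemma lshift_ne_nil {M : Multiset (DEdge G)} {l : List (LEdge G)} :
    lshift G M l ≠ [] ↔ l ≠ [] := by
  simp [lshift]

lemma comp_lshift (M N : Multiset (DEdge G)) (p q : List (LEdge G)) :
    LComposable G (lshift G M p) (lshift G N q) ↔ LComposable G p q := by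
  simp only [LComposable, lshift, List.getLast?_map, List.head?_map, Option.map_eq_some_iff]
  constructor
  · rintro ⟨d, e, ⟨d₀, hd₀, rfl⟩, ⟨e₀, he₀, rfl⟩, h⟩
    exact ⟨d₀, e₀, hd₀, he₀, h⟩
  · rintro ⟨d, e, hd, he, h⟩
    exact ⟨_, _, ⟨d, hd, rfl⟩, ⟨e, he, rfl⟩, h⟩

lemma comp_lshift_right (N : Multiset (DEdge G)) (p q : List (LEdge G)) :
    LComposable G p (lshift G N q) ↔ LComposable G p q := by
  simp only [LComposable, lshift, List.head?_map, Option.map_eq_some_iff]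
  constructor
  · rintro ⟨d, e, hd, ⟨e₀, he₀, rfl⟩, h⟩
    exact ⟨d, e₀, hd, he₀, h⟩
  · rintro ⟨d, e, hd, he, h⟩
    exact ⟨d, _, hd, ⟨e, he, rfl⟩, h⟩

lemma chain'_lshift (M : Multiset (DEdge G)) (l : List (LEdge G)) :
    (lshift G M l).Chain' (fun a b => a.1.1.2 = b.1.1.1) ↔
      l.Chain' (fun a b => a.1.1.2 = b.1.1.1) := by
  rw [lshift, List.Chain', List.isChain_map]; rfl

lemma comp_ne_nil {p q : List (LEdge G)} (h : LComposable G p q) : p ≠ [] ∧ q ≠ [] := by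
  obtain ⟨d, e, hd, he, -⟩ := h
  constructor <;> rintro rfl <;> simp_all

lemma comp_append_left {q : List (LEdge G)} (hq : q ≠ []) (p r : List (LEdge G)) :
    LComposable G (p ++ q) r ↔ LComposable G q r := by
  have : (p ++ q).getLast? = q.getLast? := by
    rw [List.getLast?_append]
    cases hql : q.getLast? with
    | none => exact absurd (List.getLast?_eq_none_iff.mp hql) hq
    | some d => rfl
  simp [LComposable, this]

lemma comp_append_right {q : List (LEdge G)} (hq : q ≠ []) (p r : List (LEdge G)) :
    LComposable G p (q ++ r) ↔ LComposable G p q := by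
  have : (q ++ r).head? = q.head? := by
    rw [List.head?_append]
    cases hql : q.head? with
    | none => exact absurd (List.head?_eq_none_iff.mp hql) hq
    | some d => rfl
  simp [LComposable, this]

lemma sone_smul (y : SMult G) : smul G (sone G) y = y := by
  have h0 : lshift G (0 : Multiset (DEdge G)) = id := funext fun l => lshift_zero l
  refine Prod.ext (by simp [smul, sone]) ?_
  simp [smul, sone, h0]

lemma smul_sone (x : SMult G) : smul G x (sone G) = x := by
  refine Prod.ext (by simp [smul, sone]) ?_
  simp [smul, sone]

lemma smul_assoc (x y z : SMult G) :
    smul G (smul G x y) z = smul G x (smul G y z) := by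
  refine Prod.ext (add_assoc _ _ _) ?_
  have himg : lshift G x.1 '' (lshift G y.1 '' z.2) = lshift G (x.1 + y.1) '' z.2 := by
    rw [Set.image_image]
    exact Set.image_congr' (fun l => lshift_lshift _ _ _)
  set A := x.2 with hA
  set B := lshift G x.1 '' y.2 with hB
  set C := lshift G (x.1 + y.1) '' z.2 with hC
  set PAB := {r | ∃ p ∈ A, ∃ q ∈ B, LComposable G p q ∧ r = p ++ q} with hPAB
  set PBC := {r | ∃ p ∈ B, ∃ q ∈ C, LComposable G p q ∧ r = p ++ q} with hPBC
  have hPyz : lshift G x.1 ''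
      {r | ∃ p ∈ y.2, ∃ q ∈ lshift G y.1 '' z.2, LComposable G p q ∧ r = p ++ q} = PBC := by
    ext r
    constructor
    · rintro ⟨r₀, ⟨p, hp, q, ⟨q₀, hq₀, rfl⟩, hcomp, rfl⟩, rfl⟩
      refine ⟨lshift G x.1 p, ⟨p, hp, rfl⟩, lshift G (x.1 + y.1) q₀,
        ⟨q₀, hq₀, rfl⟩, ?_, ?_⟩
      · rw [comp_lshift]; rwa [comp_lshift_right] at hcomp
      · rw [lshift_append, lshift_lshift]
    · rintro ⟨p', ⟨p, hp, rfl⟩, q', ⟨q₀, hq₀, rfl⟩, hcomp, rfl⟩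
      refine ⟨p ++ lshift G y.1 q₀, ⟨p, hp, lshift G y.1 q₀, ⟨q₀, hq₀, rfl⟩, ?_, rfl⟩, ?_⟩
      · rw [← comp_lshift x.1 x.1, lshift_lshift]; exact hcomp
      · rw [lshift_append, lshift_lshift]
  show (A ∪ B ∪ PAB) ∪ C ∪
      {r | ∃ p ∈ A ∪ B ∪ PAB, ∃ q ∈ C, LComposable G p q ∧ r = p ++ q} =
    A ∪ lshift G x.1 '' (y.2 ∪ lshift G y.1 '' z.2 ∪
        {r | ∃ p ∈ y.2, ∃ q ∈ lshift G y.1 '' z.2, LComposable G p q ∧ r = p ++ q}) ∪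
      {r | ∃ p ∈ A, ∃ q ∈ lshift G x.1 '' (y.2 ∪ lshift G y.1 '' z.2 ∪
        {r | ∃ p ∈ y.2, ∃ q ∈ lshift G y.1 '' z.2, LComposable G p q ∧ r = p ++ q}),
        LComposable G p q ∧ r = p ++ q}
  rw [Set.image_union, Set.image_union, himg, hPyz]
  ext r
  simp only [Set.mem_union, Set.mem_setOf_eq]
  constructor
  · rintro ((((hr | hr) | ⟨p, hp, q, hq, hcomp, rfl⟩) | hr) |
      ⟨p, ((hp | hp) | ⟨a, ha, b, hb, hab, rfl⟩), q, hq, hcomp, rfl⟩)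
    · exact Or.inl (Or.inl hr)
    · exact Or.inl (Or.inr (Or.inl (Or.inl hr)))
    · exact Or.inr ⟨p, hp, q, Or.inl (Or.inl hq), hcomp, rfl⟩
    · exact Or.inl (Or.inr (Or.inl (Or.inr hr)))
    · exact Or.inr ⟨p, hp, q, Or.inl (Or.inr hq), hcomp, rfl⟩
    · exact Or.inl (Or.inr (Or.inr ⟨p, hp, q, hq, hcomp, rfl⟩))
    · have hbne := (comp_ne_nil hab).2
      have hbq : LComposable G b q := (comp_append_left hbne a q).mp hcomp
      refine Or.inr ⟨a, ha, b ++ q, Or.inr ⟨b, hb, q, hq, hbq, rfl⟩, ?_, ?_⟩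
      · exact (comp_append_right hbne a q).mpr hab
      · rw [List.append_assoc]
  · rintro ((hr | ((hr | hr) | ⟨b, hb, c, hc, hbc, rfl⟩)) |
      ⟨p, hp, q, ((hq | hq) | ⟨b, hb, c, hc, hbc, rfl⟩), hcomp, rfl⟩)
    · exact Or.inl (Or.inl (Or.inl (Or.inl hr)))
    · exact Or.inl (Or.inl (Or.inl (Or.inr hr)))
    · exact Or.inl (Or.inr hr)
    · exact Or.inr ⟨b, Or.inl (Or.inr hb), c, hc, hbc, rfl⟩
    · exact Or.inl (Or.inl (Or.inr ⟨p, hp, q, hq, hcomp, rfl⟩))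
    · exact Or.inr ⟨p, Or.inl (Or.inl hp), q, hq, hcomp, rfl⟩
    · have hbne := (comp_ne_nil hbc).1
      have hpb : LComposable G p b := (comp_append_right hbne p c).mp hcomp
      refine Or.inr ⟨p ++ b, Or.inr ⟨p, hp, b, hb, hpb, rfl⟩, c, hc, ?_, ?_⟩
      · exact (comp_append_left hbne p c).mpr hbc
      · rw [List.append_assoc]

lemma foldr_smul_eq (l : List (SMult G)) (b : SMult G) :
    l.foldr (smul G) b = smul G (l.foldr (smul G) (sone G)) b := by
  induction l with
  | nil => simp [sone_smul]
  | cons a t ih => simp only [List.foldr_cons, ih, ← smul_assoc]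

/-- The canonical labelling of a list of edges, giving each edge a label equal
to the number of earlier occurrences of the same edge. -/
def lab : List (DEdge G) → List (LEdge G)
  | [] => []
  | e :: L => (e, 0) :: lshift G {e} (lab L)

lemma prod_spec (L : List (DEdge G)) :
    (L.map (edgeElem G)).foldr (smul G) (sone G) =
      ((L : Multiset (DEdge G)),
        {l | l ≠ [] ∧ l.Chain' (fun a b => a.1.1.2 = b.1.1.1) ∧ l <+ lab L}) := by
  induction L with
  | nil =>
    refine Prod.ext (by simp [sone]) ?_
    show (∅ : Set (List (LEdge G))) = _
    ext l
    simp only [lab, Set.mem_empty_iff_false, Set.mem_setOf_eq, List.sublist_nil, false_iff]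
    rintro ⟨h1, -, rfl⟩; exact h1 rfl
  | cons e L ih =>
    simp only [List.map_cons, List.foldr_cons, ih]
    refine Prod.ext ?_ ?_
    · show {e} + (↑L : Multiset (DEdge G)) = ↑(e :: L)
      rw [Multiset.singleton_add, Multiset.cons_coe]
    · show ({[(e, 0)]} : Set (List (LEdge G))) ∪ lshift G {e} '' _ ∪ _ = _
      ext r
      simp only [Set.mem_union, Set.mem_singleton_iff, Set.mem_image, Set.mem_setOf_eq, lab]
      constructor
      · rintro ((rfl | ⟨q, ⟨hq1, hq2, hq3⟩, rfl⟩) |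
          ⟨p, rfl, q', ⟨q, ⟨hq1, hq2, hq3⟩, rfl⟩, hcomp, rfl⟩)
        · exact ⟨List.cons_ne_nil _ _, List.isChain_singleton _,
            List.cons_sublist_cons.mpr (List.nil_sublist _)⟩
        · exact ⟨lshift_ne_nil.mpr hq1, (chain'_lshift _ _).mpr hq2,
            List.sublist_cons_of_sublist _ (hq3.map _)⟩
        · obtain ⟨d, e', hd, he', hrel⟩ := hcomp
          simp only [List.getLast?_singleton, Option.some.injEq] at hd
          subst hd
          refine ⟨by simp, ?_, ?_⟩
          · rw [List.singleton_append, List.Chain', List.isChain_cons]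
            refine ⟨fun y hy => ?_, (chain'_lshift _ _).mpr hq2⟩
            rw [he'] at hy
            cases hy
            exact hrel
          · rw [List.singleton_append]
            exact List.cons_sublist_cons.mpr (hq3.map _)
      · rintro ⟨hne, hch, hsub⟩
        rcases List.sublist_cons_iff.mp hsub with h | ⟨r', rfl, hr'⟩
        · obtain ⟨q, hq, rfl⟩ := List.sublist_map_iff.mp h
          exact Or.inl (Or.inr ⟨q, ⟨fun h => hne (by simp [h, lshift]),
            (chain'_lshift _ _).mp hch, hq⟩, rfl⟩)
        · obtain ⟨q, hq, rfl⟩ := List.sublist_map_iff.mp hr'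
          cases q with
          | nil => exact Or.inl (Or.inl rfl)
          | cons y t =>
            rw [List.Chain', List.isChain_cons] at hch
            refine Or.inr ⟨[(e, 0)], rfl, lshift G {e} (y :: t),
              ⟨y :: t, ⟨List.cons_ne_nil _ _, (chain'_lshift _ _).mp hch.2, hq⟩, rfl⟩, ?_, rfl⟩
            refine ⟨(e, 0), (y.1, y.2 + Multiset.count y.1 {e}), rfl, rfl, ?_⟩
            exact hch.1 _ rfl

lemma lab_nodup {L : List (DEdge G)} (h : L.Nodup) :
    lab L = L.map (fun e => (e, (0 : ℕ))) := by
  induction L with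
  | nil => rfl
  | cons e L ih =>
    rw [List.nodup_cons] at h
    show (e, 0) :: lshift G {e} (lab L) = _
    rw [ih h.2, List.map_cons]
    congr 1
    rw [lshift, List.map_map]
    refine List.map_congr_left fun f hf => ?_
    have hfe : f ≠ e := fun hfe => h.1 (hfe ▸ hf)
    simp [Multiset.count_singleton, hfe]

lemma pathIn_singleton {e : DEdge G} {l : List (DEdge G)}
    (h : IsPathIn G {e} l) : l = [e] := by
  obtain ⟨hne, hch, hmem⟩ := h
  match l, hne with
  | [x], _ =>
    have hx := hmem x (List.mem_cons_self)
    rw [Finset.mem_singleton] at hx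
    rw [hx]
  | x :: y :: t, _ =>
    have hx := hmem x (by simp)
    have hy := hmem y (by simp)
    rw [Finset.mem_singleton] at hx hy
    subst x; subst y
    rw [List.Chain', List.isChain_cons_cons] at hch
    exact absurd hch.1.symm e.2.ne

/-- A single directed edge, as a directed subgraph. -/
def singleEdge (e : DEdge G) : DirSub G where
  edges := {e}
  connected := by
    intro v w hv hw
    obtain ⟨e₁, he₁, hv⟩ := hv
    obtain ⟨e₂, he₂, hw⟩ := hw
    rw [Finset.mem_singleton] at he₁ he₂
    subst e₁; subst e₂
    have step12 : ∃ d ∈ ({e} : Finset (DEdge G)),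
        (d.1.1 = e.1.1 ∧ d.1.2 = e.1.2) ∨ (d.1.1 = e.1.2 ∧ d.1.2 = e.1.1) :=
      ⟨e, Finset.mem_singleton_self e, Or.inl ⟨rfl, rfl⟩⟩
    have step21 : ∃ d ∈ ({e} : Finset (DEdge G)),
        (d.1.1 = e.1.2 ∧ d.1.2 = e.1.1) ∨ (d.1.1 = e.1.1 ∧ d.1.2 = e.1.2) :=
      ⟨e, Finset.mem_singleton_self e, Or.inr ⟨rfl, rfl⟩⟩
    rcases hv with rfl | rfl <;> rcases hw with rfl | rfl
    · exact Relation.ReflTransGen.refl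
    · exact Relation.ReflTransGen.single step12
    · exact Relation.ReflTransGen.single step21
    · exact Relation.ReflTransGen.refl
  uniquePath := by
    intro v w l₁ l₂ h₁ h₂ _ _ _ _
    rw [pathIn_singleton h₁, pathIn_singleton h₂]
  acyclic := by
    intro v l hl hs he
    rw [pathIn_singleton hl] at hs he
    obtain ⟨a, ha, hav⟩ := hs
    obtain ⟨b, hb, hbv⟩ := he
    simp only [List.head?_cons, Option.some.injEq] at ha
    simp only [List.getLast?_singleton, Option.some.injEq] at hb
    subst ha; subst hb
    exact e.2.ne (hav.trans hbv.symm)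

lemma toSM_singleEdge (e : DEdge G) : toSM G (singleEdge e) = edgeElem G e := by
  refine Prod.ext (by simp [toSM, edgeElem, singleEdge]) ?_
  ext l
  simp only [toSM, edgeElem, Set.mem_setOf_eq, Set.mem_singleton_iff, LIsPathIn]
  constructor
  · rintro ⟨hne, hch, hcnt⟩
    have hel : ∀ p ∈ l, p = (e, 0) := by
      intro p hp
      have h1 := hcnt p hp
      have : (singleEdge (G := G) e).edges.val = ({e} : Multiset (DEdge G)) := by
        simp [singleEdge]
      rw [this, Multiset.count_singleton] at h1
      by_cases hpe : p.1 = e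
      · rw [if_pos hpe] at h1
        exact Prod.ext hpe (by omega)
      · rw [if_neg hpe] at h1
        exact absurd h1 (by omega)
    match l, hne with
    | [x], _ => rw [hel x (List.mem_cons_self)]
    | x :: y :: t, _ =>
      have hx := hel x (by simp)
      have hy := hel y (by simp)
      subst hx; subst hy
      rw [List.Chain', List.isChain_cons_cons] at hch
      exact absurd hch.1.symm e.2.ne
  · rintro rfl
    refine ⟨List.cons_ne_nil _ _, List.isChain_singleton _, ?_⟩
    intro p hp
    simp only [List.mem_singleton] at hp
    subst hp
    simp [singleEdge, Multiset.count_singleton]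

lemma exists_min_finset {α : Type*} {r : α → α → Prop} (htr : Transitive r)
    (hirr : ∀ x, ¬ r x x) :
    ∀ s : Finset α, s.Nonempty → ∃ m ∈ s, ∀ x ∈ s, ¬ r x m := by
  classical
  intro s
  induction s using Finset.strongInduction with
  | _ s ih =>
    intro hs
    obtain ⟨a, ha⟩ := hs
    by_cases h : ∀ x ∈ s, ¬ r x a
    · exact ⟨a, ha, h⟩
    · push_neg at h
      obtain ⟨x, hx, hxa⟩ := h
      have hsub : s.filter (fun y => r y a) ⊂ s :=
        Finset.filter_ssubset.mpr ⟨a, ha, hirr a⟩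
      obtain ⟨m, hm, hmin⟩ := ih _ hsub ⟨x, Finset.mem_filter.mpr ⟨hx, hxa⟩⟩
      have hma := (Finset.mem_filter.mp hm).2
      refine ⟨m, (Finset.mem_filter.mp hm).1, fun y hy hym => ?_⟩
      exact hmin y (Finset.mem_filter.mpr ⟨hy, htr hym hma⟩) hym

lemma topo_sort {α : Type*} [DecidableEq α] {r : α → α → Prop} (htr : Transitive r)
    (hirr : ∀ x, ¬ r x x) :
    ∀ s : Finset α, ∃ L : List α, L.Nodup ∧ (∀ e, e ∈ L ↔ e ∈ s) ∧
      ∀ e f, e ∈ L → f ∈ L → r e f → L.idxOf e < L.idxOf f := by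
  classical
  intro s
  induction s using Finset.strongInduction with
  | _ s ih =>
    rcases s.eq_empty_or_nonempty with rfl | hne
    · exact ⟨[], List.nodup_nil, by simp, by simp⟩
    · obtain ⟨m, hm, hmin⟩ := exists_min_finset htr hirr s hne
      obtain ⟨L', hnd, hmem, hord⟩ := ih (s.erase m) (Finset.erase_ssubset hm)
      have hmL' : m ∉ L' := fun h => (Finset.notMem_erase m s) ((hmem m).mp h)
      have hmemS : ∀ e, e ∈ m :: L' → e ∈ s := by
        rintro e he
        rcases List.mem_cons.mp he with rfl | h
        · exact hm
        · exact Finset.mem_of_mem_erase ((hmem e).mp h)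
      refine ⟨m :: L', List.nodup_cons.mpr ⟨hmL', hnd⟩, ?_, ?_⟩
      · intro e
        rw [List.mem_cons, hmem, Finset.mem_erase]
        constructor
        · rintro (rfl | ⟨-, h⟩)
          · exact hm
          · exact h
        · intro hes
          by_cases he : e = m
          · exact Or.inl he
          · exact Or.inr ⟨he, hes⟩
      · intro e f heL hfL hef
        by_cases hf : f = m
        · subst hf
          exact absurd hef (hmin e (hmemS e heL))
        · rw [List.idxOf_cons_ne _ (Ne.symm hf)]
          have hfL' : f ∈ L' := by
            rcases List.mem_cons.mp hfL with rfl | h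
            · exact absurd rfl hf
            · exact h
          by_cases he : e = m
          · subst he
            rw [List.idxOf_cons_self]
            exact Nat.succ_pos _
          · rw [List.idxOf_cons_ne _ (Ne.symm he)]
            have heL' : e ∈ L' := by
              rcases List.mem_cons.mp heL with rfl | h
              · exact absurd rfl he
              · exact h
            exact Nat.succ_lt_succ (hord e f heL' hfL' hef)

lemma chain'_imp_mem {α : Type*} {r s : α → α → Prop} {P : α → Prop} :
    ∀ {l : List α}, l.Chain' r → (∀ x ∈ l, P x) →
      (∀ a b, P a → P b → r a b → s a b) → l.Chain' s := by
  intro l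
  induction l with
  | nil => intro _ _ _; exact List.isChain_nil
  | cons a t ih =>
    intro h hP him
    rw [List.Chain', List.isChain_cons] at h ⊢
    exact ⟨fun y hy => him a y (hP a (List.mem_cons_self))
      (hP y (List.mem_cons_of_mem a (List.mem_of_mem_head? hy))) (h.1 y hy),
      ih h.2 (fun x hx => hP x (List.mem_cons_of_mem a hx)) him⟩

lemma sublist_of_indexOf_lt {α : Type*} [DecidableEq α] :
    ∀ (L l : List α), (∀ x ∈ l, x ∈ L) →
      l.Pairwise (fun a b => L.idxOf a < L.idxOf b) → l <+ L := by
  intro L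
  induction L with
  | nil =>
    intro l hmem _
    have : l = [] := List.eq_nil_iff_forall_not_mem.mpr
      (fun x hx => List.not_mem_nil (hmem x hx))
    simp [this]
  | cons b L ih =>
    intro l hmem hp
    cases l with
    | nil => exact List.nil_sublist _
    | cons a t =>
      by_cases hab : a = b
      · subst hab
        have ht : ∀ x ∈ t, x ≠ a ∧ x ∈ L := by
          intro x hx
          have hxl := hmem x (List.mem_cons_of_mem a hx)
          have hrel := List.rel_of_pairwise_cons hp hx
          constructor
          · rintro rfl
            exact absurd hrel (lt_irrefl _)
          · rcases List.mem_cons.mp hxl with rfl | h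
            · exact absurd hrel (lt_irrefl _)
            · exact h
        refine List.cons_sublist_cons.mpr (ih t (fun x hx => (ht x hx).2) ?_)
        refine (List.pairwise_cons.mp hp).2.imp_of_mem ?_
        intro x y hx hy hxy
        rw [List.idxOf_cons_ne _ (Ne.symm (ht x hx).1),
          List.idxOf_cons_ne _ (Ne.symm (ht y hy).1)] at hxy
        exact Nat.lt_of_succ_lt_succ hxy
      · have hne : ∀ x ∈ a :: t, x ≠ b ∧ x ∈ L := by
          intro x hx
          have hxl := hmem x hx
          have hxb : x ≠ b := by
            rintro rfl
            rcases List.mem_cons.mp hx with rfl | h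
            · exact hab rfl
            · have hrel := List.rel_of_pairwise_cons hp h
              rw [List.idxOf_cons_self] at hrel
              exact Nat.not_lt_zero _ hrel
          rcases List.mem_cons.mp hxl with rfl | h
          · exact absurd rfl hxb
          · exact ⟨hxb, h⟩
        refine List.sublist_cons_of_sublist b (ih (a :: t) (fun x hx => (hne x hx).2) ?_)
        refine hp.imp_of_mem ?_
        intro x y hx hy hxy
        rw [List.idxOf_cons_ne _ (Ne.symm (hne x hx).1),
          List.idxOf_cons_ne _ (Ne.symm (hne y hy).1)] at hxy
        exact Nat.lt_of_succ_lt_succ hxy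

lemma toSM_eq_prod (D : DirSub G) :
    ∃ L : List (DEdge G),
      toSM G D = (L.map (edgeElem G)).foldr (smul G) (sone G) := by
  classical
  set R0 : DEdge G → DEdge G → Prop :=
    fun e f => e ∈ D.edges ∧ f ∈ D.edges ∧ e.1.2 = f.1.1 with hR0
  have key : ∀ e f, Relation.TransGen R0 e f → ∃ l : List (DEdge G), l ≠ [] ∧
      l.Chain' (fun d e => d.1.2 = e.1.1) ∧ (∀ x ∈ l, x ∈ D.edges) ∧
      l.head? = some e ∧ ∃ g, l.getLast? = some g ∧ g.1.2 = f.1.1 := by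
    intro e f h
    induction h with
    | @single b hb =>
      exact ⟨[e], by simp, List.isChain_singleton e, by simp [hb.1], rfl, e, rfl, hb.2.2⟩
    | @tail b c h₁ h₂ ih =>
      obtain ⟨l, hne, hch, hmem, hhead, g, hlast, hg⟩ := ih
      refine ⟨l ++ [b], by simp, ?_, ?_, ?_, b, ?_, h₂.2.2⟩
      · refine List.IsChain.append hch (List.isChain_singleton b) ?_
        intro x hx y hy
        rw [hlast] at hx
        simp only [Option.mem_def, Option.some.injEq, List.head?_cons] at hx hy
        subst hx; subst hy
        exact hg
      · intro x hx
        rcases List.mem_append.mp hx with h | h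
        · exact hmem x h
        · rw [List.mem_singleton] at h; subst h; exact h₂.1
      · rw [List.head?_append, hhead]; rfl
      · rw [List.getLast?_append]; rfl
  have htr : Transitive (Relation.TransGen R0) := fun a b c hab hbc => hab.trans hbc
  have hirr : ∀ e, ¬ Relation.TransGen R0 e e := by
    intro e h
    obtain ⟨l, hne, hch, hmem, hhead, g, hlast, hg⟩ := key e e h
    exact D.acyclic e.1.1 l ⟨hne, hch, hmem⟩ ⟨e, hhead, rfl⟩ ⟨g, hlast, hg⟩
  obtain ⟨L, hnd, hmemL, hord⟩ := topo_sort htr hirr D.edges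
  have hmul : (↑L : Multiset (DEdge G)) = D.edges.val := by
    have hfin : (⟨(↑L : Multiset (DEdge G)), Multiset.coe_nodup.mpr hnd⟩ : Finset (DEdge G))
        = D.edges := Finset.ext (fun e => by simpa using hmemL e)
    exact congrArg Finset.val hfin
  refine ⟨L, ?_⟩
  rw [prod_spec, toSM]
  refine Prod.ext (by simpa using hmul.symm) ?_
  rw [lab_nodup hnd]
  ext l
  simp only [Set.mem_setOf_eq, LIsPathIn]
  constructor
  · rintro ⟨hne, hch, hcnt⟩
    refine ⟨hne, hch, ?_⟩
    have hel : ∀ p ∈ l, p.1 ∈ D.edges ∧ p.2 = 0 := by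
      intro p hp
      have h1 := hcnt p hp
      have h2 : Multiset.count p.1 D.edges.val ≤ 1 :=
        (Multiset.nodup_iff_count_le_one.mp D.edges.nodup) p.1
      refine ⟨?_, by omega⟩
      exact Finset.mem_val.mp (Multiset.count_pos.mp (Nat.lt_of_le_of_lt (Nat.zero_le _) h1))
    have hl_eq : l.map (fun p => (p.1, (0 : ℕ))) = l := by
      have := List.map_congr_left (l := l)
        (f := fun p : LEdge G => (p.1, (0 : ℕ))) (g := id)
        (fun p hp => Prod.ext rfl ((hel p hp).2.symm))
      rw [this, List.map_id]
    set l' := l.map Prod.fst with hl'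
    have hchl' : l'.Chain' (fun d e => d.1.2 = e.1.1) := by
      rw [hl', List.Chain', List.isChain_map]
      exact hch
    have hmeml' : ∀ x ∈ l', x ∈ D.edges := by
      intro x hx
      obtain ⟨p, hp, rfl⟩ := List.mem_map.mp hx
      exact (hel p hp).1
    have hchR0 : l'.Chain' R0 :=
      chain'_imp_mem hchl' hmeml' (fun a b ha hb hr => ⟨ha, hb, hr⟩)
    have hchRt : l'.Chain' (Relation.TransGen R0) :=
      hchR0.imp (fun a b h => Relation.TransGen.single h)
    haveI : IsTrans (DEdge G) (Relation.TransGen R0) :=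
      ⟨fun a b c hab hbc => hab.trans hbc⟩
    have hpw : l'.Pairwise (Relation.TransGen R0) := List.isChain_iff_pairwise.mp hchRt
    have hpw2 : l'.Pairwise (fun a b => @List.idxOf _ instBEqOfDecidableEq a L < @List.idxOf _ instBEqOfDecidableEq b L) :=
      hpw.imp_of_mem (fun hx hy hr =>
        hord _ _ ((hmemL _).mpr (hmeml' _ hx)) ((hmemL _).mpr (hmeml' _ hy)) hr)
    have hsubl' : l' <+ L :=
      sublist_of_indexOf_lt L l' (fun x hx => (hmemL x).mpr (hmeml' x hx)) hpw2
    have := hsubl'.map (fun e => (e, (0 : ℕ)))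
    rw [hl', List.map_map] at this
    rwa [show (fun e : DEdge G => (e, (0:ℕ))) ∘ Prod.fst = fun p : LEdge G => (p.1, (0:ℕ))
      from rfl, hl_eq] at this
  · rintro ⟨hne, hch, hsub⟩
    refine ⟨hne, hch, fun p hp => ?_⟩
    have hpL := hsub.subset hp
    obtain ⟨f, hf, rfl⟩ := List.mem_map.mp hpL
    have hfD : f ∈ D.edges := (hmemL f).mp hf
    exact Multiset.count_pos.mpr (Finset.mem_val.mpr hfD)

lemma genBy_of_forall :
    ∀ l : List (SMult G), (∀ a ∈ l, a ∈ Set.range (toSM G)) →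
      l.foldr (smul G) (sone G) ∈ GenBy (Set.range (edgeElem G)) (smul G) (sone G) := by
  intro l
  induction l with
  | nil => exact fun _ => ⟨[], by simp, rfl⟩
  | cons a t ih =>
    intro hl
    obtain ⟨l₂, hl₂, hw⟩ := ih (fun b hb => hl b (List.mem_cons_of_mem a hb))
    obtain ⟨D, rfl⟩ := hl a (List.mem_cons_self)
    obtain ⟨L, hL⟩ := toSM_eq_prod D
    refine ⟨L.map (edgeElem G) ++ l₂, ?_, ?_⟩
    · intro b hb
      rcases List.mem_append.mp hb with h | h
      · obtain ⟨e, -, rfl⟩ := List.mem_map.mp h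
        exact ⟨e, rfl⟩
      · exact hl₂ b h
    · rw [List.foldr_append, foldr_smul_eq, ← hL, hw]
      rfl

end Aux

/-- Directed edges generate `Mod(G)`: the submonoid of `(SMult(G), •)`
generated by all directed subgraphs of `G` coincides with the submonoid
generated by the single directed edges of `G`. -/
theorem modSet_eq_genBy_edges :
    ModSet G = GenBy (Set.range (edgeElem G)) (smul G) (sone G) := by
  apply Set.Subset.antisymm
  · rintro x ⟨l, hl, rfl⟩
    exact genBy_of_forall l hl
  · rintro x ⟨l, hl, rfl⟩
    refine ⟨l, fun a ha => ?_, rfl⟩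
    obtain ⟨e, rfl⟩ := hl a ha
    exact ⟨singleEdge e, toSM_singleEdge e⟩

end GGNN
end

section
/- The transformation Tr sending a monoid element D₁ • D₂ • ⋯ • D_k of Mod(G) to Rep(D₁) ∘ Rep(D₂) ∘ ⋯ ∘ Rep(D_k) is well-defined (independent of the decomposition), and the (i,j) entry of Tr(M,S) equals the number of paths in S from v_i to v_j; moreover Tr is a surjective monoid homomorphism from (Mod(G), •) to (Mom(G), ∘). -/
namespace GGNN

variable {V : Type*} (G : SimpleGraph V)

variable [DecidableEq V]

/-- The operation `A ∘ B = A + B + A·B` on matrices. -/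
def op [Fintype V] (A B : Matrix V V ℝ) : Matrix V V ℝ := A + B + A * B

open scoped Classical in
/-- The matrix representation `Rep(D)` of a directed subgraph: entry `(v, w)`
is `1` if `v ≤_D w` (there is a directed path in `D` from `v` to `w`) and `0`
otherwise. -/
noncomputable def Rep [Fintype V] (D : DirSub G) : Matrix V V ℝ :=
  Matrix.of fun v w => if Reaches G D v w then 1 else 0

/-- The labelled path `l` starts at the vertex `v`. -/
def startsAtL (l : List (LEdge G)) (v : V) : Prop :=
  ∃ p, l.head? = some p ∧ p.1.1.1 = v

/-- The labelled path `l` ends at the vertex `v`. -/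
def endsAtL (l : List (LEdge G)) (v : V) : Prop :=
  ∃ p, l.getLast? = some p ∧ p.1.1.2 = v

/-- The `•`-product `D₁ • D₂ • ⋯ • D_k` in `Mod(G)` of a list of directed
subgraphs. -/
def prodSM (L : List (DirSub G)) : SMult G :=
  (L.map (toSM G)).foldr (smul G) (sone G)

/-- The `∘`-product `A₁ ∘ A₂ ∘ ⋯ ∘ A_k` of a list of matrices. -/
def prodMat [Fintype V] (L : List (Matrix V V ℝ)) : Matrix V V ℝ :=
  L.foldr (op) 0

/-- `Mom(G)`: the submonoid of `(Mat_n(ℝ), ∘)` generated by the matrix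
representations of the directed subgraphs of `G`. -/
noncomputable def MomSet [Fintype V] : Set (Matrix V V ℝ) :=
  GenBy (Set.range (Rep G)) (op) 0

set_option linter.unusedSectionVars false
set_option maxHeartbeats 1000000

section Aux0
variable [Fintype V]

lemma op_assoc (A B C : Matrix V V ℝ) : op (op A B) C = op A (op B C) := by
  simp only [op]; noncomm_ring

lemma op_zero (A : Matrix V V ℝ) : op A 0 = A := by simp [op]

lemma zero_op (A : Matrix V V ℝ) : op 0 A = A := by simp [op]

lemma foldr_op (l : List (Matrix V V ℝ)) (B : Matrix V V ℝ) :
    l.foldr op B = op (l.foldr op 0) B := by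
  induction l with
  | nil => simp [zero_op]
  | cons a t ih => simp only [List.foldr_cons, ih, op_assoc]

lemma prodMat_append' (L₁ L₂ : List (Matrix V V ℝ)) :
    prodMat (L₁ ++ L₂) = op (prodMat L₁) (prodMat L₂) := by
  simp only [prodMat, List.foldr_append]
  exact foldr_op _ _

end Aux0

section Aux1
variable [DecidableEq V]

/-- Paths in `S` from `v` to `w`. -/
def PP (S : Set (List (LEdge G))) (v w : V) : Set (List (LEdge G)) :=
  {l | l ∈ S ∧ startsAtL G l v ∧ endsAtL G l w}

lemma startsAtL_unlab {l : List (LEdge G)} {v : V} :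
    startsAtL G l v ↔ startsAt G (l.map Prod.fst) v := by
  constructor
  · rintro ⟨p, hp, hv⟩; exact ⟨p.1, by simp [List.head?_map, hp], hv⟩
  · rintro ⟨e, he, hv⟩
    simp only [List.head?_map, Option.map_eq_some_iff] at he
    obtain ⟨p, hp, rfl⟩ := he
    exact ⟨p, hp, hv⟩

lemma endsAtL_unlab {l : List (LEdge G)} {v : V} :
    endsAtL G l v ↔ endsAt G (l.map Prod.fst) v := by
  constructor
  · rintro ⟨p, hp, hv⟩
    exact ⟨p.1, by rw [List.getLast?_map]; simp [hp], hv⟩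
  · rintro ⟨e, he, hv⟩
    rw [List.getLast?_map, Option.map_eq_some_iff] at he
    obtain ⟨p, hp, rfl⟩ := he
    exact ⟨p, hp, hv⟩

lemma all_zero_eq {l₁ l₂ : List (LEdge G)} (h : l₁.map Prod.fst = l₂.map Prod.fst)
    (h₁ : ∀ p ∈ l₁, p.2 = 0) (h₂ : ∀ p ∈ l₂, p.2 = 0) : l₁ = l₂ := by
  have key : ∀ l : List (LEdge G), (∀ p ∈ l, p.2 = 0) →
      l.map (fun p => ((p.1 : DEdge G), (0 : ℕ))) = l := by
    intro l hl
    conv_rhs => rw [← List.map_id l]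
    exact List.map_congr_left fun p hp => by ext <;> simp [hl p hp]
  calc l₁ = l₁.map (fun p => (p.1, 0)) := (key l₁ h₁).symm
    _ = (l₁.map Prod.fst).map (fun e => (e, 0)) := by rw [List.map_map]; rfl
    _ = (l₂.map Prod.fst).map (fun e => (e, 0)) := by rw [h]
    _ = l₂.map (fun p => (p.1, 0)) := by rw [List.map_map]; rfl
    _ = l₂ := key l₂ h₂

lemma LIsPathIn_val_iff (D : DirSub G) (l : List (LEdge G)) :
    LIsPathIn G D.edges.val l ↔
      IsPathIn G D.edges (l.map Prod.fst) ∧ ∀ p ∈ l, p.2 = 0 := by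
  have hcnt : ∀ e : DEdge G, D.edges.val.count e = if e ∈ D.edges then 1 else 0 :=
    fun e => Multiset.count_eq_of_nodup D.edges.nodup
  constructor
  · rintro ⟨hne, hch, hcount⟩
    have hz : ∀ p ∈ l, p.2 = 0 ∧ p.1 ∈ D.edges := by
      intro p hp
      have := hcount p hp
      rw [hcnt] at this
      split_ifs at this with hmem
      · exact ⟨by omega, hmem⟩
      · omega
    refine ⟨⟨by simpa using hne, ?_, ?_⟩, fun p hp => (hz p hp).1⟩
    · exact (List.isChain_map Prod.fst).mpr hch
    · intro e he
      obtain ⟨p, hp, rfl⟩ := List.mem_map.mp he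
      exact (hz p hp).2
  · rintro ⟨⟨hne, hch, hmem⟩, hz⟩
    refine ⟨by simpa using hne, (List.isChain_map (Prod.fst (β := ℕ))).mp hch, ?_⟩
    intro p hp
    rw [hcnt, if_pos (hmem p.1 (List.mem_map.mpr ⟨p, hp, rfl⟩)), hz p hp]
    omega

lemma PP_D_subsingleton (D : DirSub G) (v w : V) :
    (PP G {l | LIsPathIn G D.edges.val l} v w).Subsingleton := by
  rintro l₁ ⟨h₁, s₁, e₁⟩ l₂ ⟨h₂, s₂, e₂⟩
  rw [Set.mem_setOf_eq, LIsPathIn_val_iff] at h₁ h₂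
  have := D.uniquePath v w _ _ h₁.1 h₂.1
    ((startsAtL_unlab G).mp s₁) ((startsAtL_unlab G).mp s₂)
    ((endsAtL_unlab G).mp e₁) ((endsAtL_unlab G).mp e₂)
  exact all_zero_eq G this h₁.2 h₂.2

open scoped Classical in
lemma card_PP_D (D : DirSub G) (v w : V) :
    Nat.card (PP G {l | LIsPathIn G D.edges.val l} v w)
      = if Reaches G D v w then 1 else 0 := by
  classical
  split_ifs with h
  · obtain ⟨l, hl, hs, he⟩ := h
    have hmem : (l.map fun e => (e, (0:ℕ))) ∈ PP G {l | LIsPathIn G D.edges.val l} v w := by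
      have hunlab : (l.map fun e => (e, (0:ℕ))).map Prod.fst = l := by
        rw [List.map_map]; exact List.map_id l
      refine ⟨(LIsPathIn_val_iff G D _).mpr ⟨by rwa [hunlab], ?_⟩, ?_, ?_⟩
      · intro p hp; obtain ⟨e, _, rfl⟩ := List.mem_map.mp hp; rfl
      · rw [startsAtL_unlab, hunlab]; exact hs
      · rw [endsAtL_unlab, hunlab]; exact he
    have : PP G {l | LIsPathIn G D.edges.val l} v w = {l.map fun e => (e, (0:ℕ))} :=
      Set.eq_singleton_iff_unique_mem.mpr
        ⟨hmem, fun x hx => PP_D_subsingleton G D v w hx hmem⟩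
    rw [this, Nat.card_coe_set_eq, Set.ncard_singleton]
  · have : PP G {l | LIsPathIn G D.edges.val l} v w = ∅ := by
      rw [Set.eq_empty_iff_forall_notMem]
      rintro l ⟨hl, hs, he⟩
      rw [Set.mem_setOf_eq, LIsPathIn_val_iff] at hl
      exact h ⟨l.map Prod.fst, hl.1, (startsAtL_unlab G).mp hs, (endsAtL_unlab G).mp he⟩
    rw [this]; simp

lemma lshift_high {M : Multiset (DEdge G)} {l : List (LEdge G)} :
    ∀ x ∈ lshift G M l, M.count x.1 ≤ x.2 := by
  intro x hx
  obtain ⟨p, _, rfl⟩ := List.mem_map.mp hx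
  simp

lemma startsAtL_lshift {M : Multiset (DEdge G)} {l : List (LEdge G)} {v : V} :
    startsAtL G (lshift G M l) v ↔ startsAtL G l v := by
  unfold startsAtL lshift
  rw [List.head?_map]
  constructor
  · rintro ⟨p, hp, hv⟩
    rw [Option.map_eq_some_iff] at hp
    obtain ⟨q, hq, rfl⟩ := hp
    exact ⟨q, hq, hv⟩
  · rintro ⟨p, hp, hv⟩
    exact ⟨(p.1, p.2 + M.count p.1), by rw [hp]; rfl, hv⟩

lemma endsAtL_lshift {M : Multiset (DEdge G)} {l : List (LEdge G)} {v : V} :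
    endsAtL G (lshift G M l) v ↔ endsAtL G l v := by
  unfold endsAtL lshift
  rw [List.getLast?_map]
  constructor
  · rintro ⟨p, hp, hv⟩
    rw [Option.map_eq_some_iff] at hp
    obtain ⟨q, hq, rfl⟩ := hp
    exact ⟨q, hq, hv⟩
  · rintro ⟨p, hp, hv⟩
    exact ⟨(p.1, p.2 + M.count p.1), by rw [hp]; rfl, hv⟩

lemma lshift_injective (M : Multiset (DEdge G)) : Function.Injective (lshift G M) := by
  apply List.map_injective_iff.mpr
  rintro ⟨e, i⟩ ⟨f, j⟩ h
  simp only [Prod.mk.injEq] at h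
  obtain ⟨rfl, h2⟩ := h
  simp only [Prod.mk.injEq, true_and]
  omega

lemma PP_lshift_image {M : Multiset (DEdge G)} {T : Set (List (LEdge G))} {v w : V} :
    PP G (lshift G M '' T) v w = lshift G M '' PP G T v w := by
  ext l
  constructor
  · rintro ⟨⟨l₀, hl₀, rfl⟩, hs, he⟩
    exact ⟨l₀, ⟨hl₀, (startsAtL_lshift G).mp hs, (endsAtL_lshift G).mp he⟩, rfl⟩
  · rintro ⟨l₀, ⟨hl₀, hs, he⟩, rfl⟩
    exact ⟨⟨l₀, hl₀, rfl⟩, (startsAtL_lshift G).mpr hs, (endsAtL_lshift G).mpr he⟩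

lemma LIsPathIn_add_left {M N : Multiset (DEdge G)} {l : List (LEdge G)}
    (h : LIsPathIn G M l) : LIsPathIn G (M + N) l := by
  obtain ⟨h1, h2, h3⟩ := h
  refine ⟨h1, h2, fun p hp => ?_⟩
  rw [Multiset.count_add]
  exact lt_of_lt_of_le (h3 p hp) (Nat.le_add_right _ _)

lemma LIsPathIn_lshift {M N : Multiset (DEdge G)} {l : List (LEdge G)}
    (h : LIsPathIn G N l) : LIsPathIn G (M + N) (lshift G M l) := by
  obtain ⟨h1, h2, h3⟩ := h
  refine ⟨by simpa [lshift] using h1, ?_, ?_⟩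
  · unfold lshift
    unfold List.Chain'
    rw [List.isChain_map]
    exact h2
  · intro p hp
    obtain ⟨q, hq, rfl⟩ := List.mem_map.mp hp
    have := h3 q hq
    simp only [Multiset.count_add]
    omega

lemma mem_prodSM_isPath (L : List (DirSub G)) :
    ∀ l ∈ (prodSM G L).2, LIsPathIn G (prodSM G L).1 l := by
  induction L with
  | nil => intro l hl; simp [prodSM, sone] at hl
  | cons D L ih =>
    intro l hl
    have hsm : prodSM G (D :: L) = smul G (toSM G D) (prodSM G L) := rfl
    rw [hsm] at hl ⊢
    rcases hl with (hl | ⟨l₀, hl₀, rfl⟩) | ⟨p, hp, q, ⟨q₀, hq₀, rfl⟩, hcomp, rfl⟩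
    · exact LIsPathIn_add_left G hl
    · exact LIsPathIn_lshift G (ih l₀ hl₀)
    · have hP : LIsPathIn G (D.edges.val + (prodSM G L).1) p := LIsPathIn_add_left G hp
      have hQ : LIsPathIn G (D.edges.val + (prodSM G L).1) (lshift G (toSM G D).1 q₀) :=
        LIsPathIn_lshift G (ih q₀ hq₀)
      obtain ⟨d, e, hd, he, hde⟩ := hcomp
      refine ⟨by simp [hP.1], ?_, ?_⟩
      · unfold List.Chain'
        rw [List.isChain_append]
        refine ⟨hP.2.1, hQ.2.1, ?_⟩
        intro x hx y hy
        rw [hd] at hx; rw [he] at hy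
        cases hx; cases hy; exact hde
      · intro x hx
        rcases List.mem_append.mp hx with h | h
        · exact hP.2.2 x h
        · exact hQ.2.2 x h

lemma split_unique {c : DEdge G → ℕ} :
    ∀ {p p' q q' : List (LEdge G)}, (∀ x ∈ p, x.2 < c x.1) → (∀ x ∈ p', x.2 < c x.1) →
      (∀ x ∈ q, c x.1 ≤ x.2) → (∀ x ∈ q', c x.1 ≤ x.2) →
      p ++ q = p' ++ q' → p = p' ∧ q = q' := by
  intro p
  induction p with
  | nil =>
    rintro p' q q' _ hp' hq hq' h
    cases p' with
    | nil => exact ⟨rfl, by simpa using h⟩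
    | cons a t =>
      exfalso
      simp only [List.nil_append] at h
      have ha : a ∈ q := h ▸ List.mem_cons_self (a := a)
      have := hq a ha
      have := hp' a (List.mem_cons_self (a := a))
      omega
  | cons a t iht =>
    rintro p' q q' hp hp' hq hq' h
    cases p' with
    | nil =>
      exfalso
      simp only [List.nil_append] at h
      have ha : a ∈ q' := h ▸ List.mem_cons_self (a := a)
      have := hq' a ha
      have := hp a (List.mem_cons_self (a := a))
      omega
    | cons b t' =>
      simp only [List.cons_append, List.cons.injEq] at h
      obtain ⟨rfl, h⟩ := h
      obtain ⟨h1, h2⟩ := iht (fun x hx => hp x (List.mem_cons_of_mem _ hx))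
        (fun x hx => hp' x (List.mem_cons_of_mem _ hx)) hq hq' h
      exact ⟨by rw [h1], h2⟩

end Aux1
section Aux2
variable [DecidableEq V] [Fintype V]

lemma PP_union (A B : Set (List (LEdge G))) (v w : V) :
    PP G (A ∪ B) v w = PP G A v w ∪ PP G B v w := by
  ext l; simp only [PP, Set.mem_setOf_eq, Set.mem_union]; tauto

lemma comp_mem {SD T' : Set (List (LEdge G))} {v u w : V} {p q : List (LEdge G)}
    (hp : p ∈ PP G SD v u) (hq : q ∈ PP G T' u w) :
    p ++ q ∈ PP G {r | ∃ p ∈ SD, ∃ q ∈ T', LComposable G p q ∧ r = p ++ q} v w := by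
  obtain ⟨hpS, ⟨a, ha, hav⟩, ⟨d, hd, hdu⟩⟩ := hp
  obtain ⟨hqT, ⟨e, he, heu⟩, ⟨b, hb, hbw⟩⟩ := hq
  refine ⟨⟨p, hpS, q, hqT, ⟨d, e, hd, he, by rw [hdu, heu]⟩, rfl⟩, ?_, ?_⟩
  · exact ⟨a, by rw [List.head?_append, ha]; rfl, hav⟩
  · exact ⟨b, by rw [List.getLast?_append, hb]; rfl, hbw⟩

lemma nat_card_sigma {ι : Type*} [Fintype ι] {β : ι → Type*} [∀ i, Finite (β i)] :
    Nat.card (Σ i, β i) = ∑ i, Nat.card (β i) := by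
  classical
  haveI : ∀ i, Fintype (β i) := fun i => Fintype.ofFinite (β i)
  simp [Nat.card_eq_fintype_card, Fintype.card_sigma]

open scoped Classical in
lemma key (L : List (DirSub G)) :
    ∀ v w, (PP G (prodSM G L).2 v w).Finite ∧
      prodMat (L.map (Rep G)) v w = (Nat.card (PP G (prodSM G L).2 v w) : ℝ) := by
  induction L with
  | nil =>
    intro v w
    have h : PP G (prodSM G []).2 v w = ∅ := by
      rw [Set.eq_empty_iff_forall_notMem]
      rintro l ⟨hl, -⟩
      exact hl
    rw [h]
    exact ⟨Set.finite_empty, by simp [prodMat]⟩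
  | cons D L ih =>
    intro v w
    set M := D.edges.val with hM
    set T := (prodSM G L).2 with hT
    set SD : Set (List (LEdge G)) := {l | LIsPathIn G M l} with hSD
    set T' := lshift G M '' T with hT'
    set C : Set (List (LEdge G)) :=
      {r | ∃ p ∈ SD, ∃ q ∈ T', LComposable G p q ∧ r = p ++ q} with hC
    have hsnd : (prodSM G (D :: L)).2 = SD ∪ T' ∪ C := rfl
    -- low/high label facts
    have hlow : ∀ l ∈ SD, ∀ x ∈ l, x.2 < M.count x.1 := fun l hl => hl.2.2
    have hnil : ∀ l ∈ SD, l ≠ [] := fun l hl => hl.1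
    have hhigh : ∀ l ∈ T', ∀ x ∈ l, M.count x.1 ≤ x.2 := by
      rintro l ⟨l₀, -, rfl⟩
      exact lshift_high G
    -- finiteness and cardinalities of the three pieces
    have finSD : ∀ u₁ u₂ : V, (PP G SD u₁ u₂).Finite := fun u₁ u₂ =>
      (PP_D_subsingleton G D u₁ u₂).finite
    have cardSD : ∀ u₁ u₂ : V, Nat.card (PP G SD u₁ u₂) = if Reaches G D u₁ u₂ then 1 else 0 :=
      fun u₁ u₂ => card_PP_D G D u₁ u₂
    have hPPT' : ∀ u₁ u₂ : V, PP G T' u₁ u₂ = lshift G M '' PP G T u₁ u₂ :=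
      fun u₁ u₂ => PP_lshift_image G
    have finT' : ∀ u₁ u₂ : V, (PP G T' u₁ u₂).Finite := fun u₁ u₂ => by
      rw [hPPT']
      exact ((ih u₁ u₂).1).image _
    have cardT' : ∀ u₁ u₂ : V, Nat.card (PP G T' u₁ u₂) = Nat.card (PP G T u₁ u₂) :=
      fun u₁ u₂ => by rw [hPPT']; exact Nat.card_image_of_injective (lshift_injective G M) _
    -- the bijection for the composite part
    have hbij : ∀ u₂ : V, Function.Bijective
        (fun x : Σ u : V, PP G SD v u × PP G T' u u₂ =>
          (⟨x.2.1.1 ++ x.2.2.1, comp_mem G x.2.1.2 x.2.2.2⟩ : PP G C v u₂)) := by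
      intro u₂
      constructor
      · rintro ⟨u, ⟨p, hp⟩, ⟨q, hq⟩⟩ ⟨u', ⟨p', hp'⟩, ⟨q', hq'⟩⟩ hEq
        simp only [Subtype.mk.injEq] at hEq
        obtain ⟨rfl, rfl⟩ := split_unique G (c := fun y => Multiset.count y M) (hlow p hp.1) (hlow p' hp'.1)
          (hhigh q hq.1) (hhigh q' hq'.1) hEq
        obtain ⟨d, hd, hdu⟩ := hp.2.2
        obtain ⟨d', hd', hdu'⟩ := hp'.2.2
        rw [hd] at hd'
        cases hd'
        have : u = u' := by rw [← hdu, hdu']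
        subst this
        rfl
      · rintro ⟨r, ⟨p, hpS, q, hqT, ⟨d, e, hd, he, hde⟩, rfl⟩, hs, hend⟩
        refine ⟨⟨e.1.1.1, ⟨p, hpS, ?_, ⟨d, hd, hde⟩⟩, ⟨q, hqT, ⟨e, he, rfl⟩, ?_⟩⟩, rfl⟩
        · -- startsAtL p v
          obtain ⟨a, ha, hav⟩ := hs
          rw [List.head?_append] at ha
          have hpne : p ≠ [] := hnil p hpS
          rw [List.head?_eq_head hpne] at ha
          exact ⟨p.head hpne, List.head?_eq_head hpne, by cases ha; exact hav⟩
        · -- endsAtL q u₂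
          obtain ⟨b, hb, hbw⟩ := hend
          have hqne : q ≠ [] := by rintro rfl; simp at he
          obtain ⟨bb, hbb⟩ := Option.isSome_iff_exists.mp (List.getLast?_isSome.mpr hqne)
          rw [List.getLast?_append, hbb] at hb
          have hb' : some bb = some b := hb
          exact ⟨bb, hbb, by injection hb' with h; rw [h]; exact hbw⟩
    -- finiteness and cardinality of the composite part
    haveI : ∀ u₁ u₂ : V, Finite (PP G SD u₁ u₂) := fun u₁ u₂ => (finSD u₁ u₂).to_subtype
    haveI : ∀ u₁ u₂ : V, Finite (PP G T' u₁ u₂) := fun u₁ u₂ => (finT' u₁ u₂).to_subtype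
    have finC : (PP G C v w).Finite := by
      rw [← Set.finite_coe_iff]
      exact Finite.of_surjective _ (hbij w).2
    have cardC : Nat.card (PP G C v w)
        = ∑ u : V, Nat.card (PP G SD v u) * Nat.card (PP G T' u w) := by
      rw [← Nat.card_congr (Equiv.ofBijective _ (hbij w)), nat_card_sigma]
      simp [Nat.card_prod]
    -- disjointness
    have dST : Disjoint (PP G SD v w) (PP G T' v w) := by
      rw [Set.disjoint_left]
      rintro l ⟨hlS, -, -⟩ ⟨hlT, -, -⟩
      obtain ⟨x, hx⟩ := List.exists_mem_of_ne_nil l (hnil l hlS)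
      exact absurd (hlow l hlS x hx) (not_lt.mpr (hhigh l hlT x hx))
    have dSC : Disjoint (PP G SD v w ∪ PP G T' v w) (PP G C v w) := by
      rw [Set.disjoint_left]
      rintro l (⟨hlS, -, -⟩ | ⟨hlT, -, -⟩) ⟨⟨p, hpS, q, hqT, ⟨d, e, hd, he, -⟩, rfl⟩, -, -⟩
      · have heq : e ∈ p ++ q := List.mem_append_right p (List.mem_of_mem_head? he)
        exact absurd (hlow _ hlS e heq)
          (not_lt.mpr (hhigh q hqT e (List.mem_of_mem_head? he)))
      · have hdp : d ∈ p ++ q := List.mem_append_left q (List.mem_of_mem_getLast? hd)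
        exact absurd (hlow p hpS d (List.mem_of_mem_getLast? hd))
          (not_lt.mpr (hhigh _ hlT d hdp))
    -- assemble
    have hPP : PP G (prodSM G (D :: L)).2 v w
        = (PP G SD v w ∪ PP G T' v w) ∪ PP G C v w := by
      rw [hsnd, PP_union, PP_union]
    have finAll : (PP G (prodSM G (D :: L)).2 v w).Finite := by
      rw [hPP]
      exact ((finSD v w).union (finT' v w)).union finC
    refine ⟨finAll, ?_⟩
    have hcard : Nat.card (PP G (prodSM G (D :: L)).2 v w)
        = Nat.card (PP G SD v w) + Nat.card (PP G T' v w) + Nat.card (PP G C v w) := by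
      rw [hPP, Nat.card_coe_set_eq,
        Set.ncard_union_eq dSC ((finSD v w).union (finT' v w)) finC,
        Set.ncard_union_eq dST (finSD v w) (finT' v w)]
      simp [Nat.card_coe_set_eq]
    have hmat : prodMat (List.map (Rep G) (D :: L)) v w
        = Rep G D v w + prodMat (List.map (Rep G) L) v w
          + ∑ u, Rep G D v u * prodMat (List.map (Rep G) L) u w := by
      show (op (Rep G D) (prodMat (List.map (Rep G) L))) v w = _
      simp [op, Matrix.add_apply, Matrix.mul_apply]
    have hrep : ∀ u₁ u₂ : V, Rep G D u₁ u₂ = (Nat.card (PP G SD u₁ u₂) : ℝ) := by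
      intro u₁ u₂
      rw [cardSD]
      simp only [Rep, Matrix.of_apply]
      split_ifs <;> simp
    have hT'c : ∀ u₁ u₂ : V,
        (Nat.card (PP G T' u₁ u₂) : ℝ) = prodMat (List.map (Rep G) L) u₁ u₂ := by
      intro u₁ u₂
      rw [cardT']
      exact ((ih u₁ u₂).2).symm
    rw [hmat, hcard]
    push_cast [cardC]
    rw [hrep v w, hT'c v w]
    congr 1
    apply Finset.sum_congr rfl
    intro u _
    rw [hrep v u, hT'c u w]

end Aux2
/-- The transformation `Tr`, sending `D₁ • D₂ • ⋯ • D_k ∈ Mod(G)` to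
`Rep(D₁) ∘ Rep(D₂) ∘ ⋯ ∘ Rep(D_k)`, is well defined (independent of the
decomposition); the `(v, w)` entry of `Tr(M, S)` is the number of paths in `S`
from `v` to `w`; and `Tr` is a surjective monoid homomorphism from
`(Mod(G), •)` onto `(Mom(G), ∘)`. -/
theorem tr_wellDefined_counts_surjective_hom [Fintype V] :
    (∀ L₁ L₂ : List (DirSub G), prodSM G L₁ = prodSM G L₂ →
      prodMat (L₁.map (Rep G)) = prodMat (L₂.map (Rep G))) ∧
    (∀ (L : List (DirSub G)) (v w : V),
      prodMat (L.map (Rep G)) v w =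
        (Nat.card {l : List (LEdge G) //
          l ∈ (prodSM G L).2 ∧ startsAtL G l v ∧ endsAtL G l w} : ℝ)) ∧
    (∀ L₁ L₂ : List (DirSub G),
      prodMat ((L₁ ++ L₂).map (Rep G)) =
        op (prodMat (L₁.map (Rep G))) (prodMat (L₂.map (Rep G)))) ∧
    (∀ B ∈ MomSet G, ∃ L : List (DirSub G), prodMat (L.map (Rep G)) = B) := by
  classical
  refine ⟨?_, ?_, ?_, ?_⟩
  · intro L₁ L₂ h
    ext v w
    rw [(key G L₁ v w).2, (key G L₂ v w).2, h]
  · intro L v w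
    exact (key G L v w).2
  · intro L₁ L₂
    rw [List.map_append]
    exact prodMat_append' _ _
  · have main : ∀ l : List (Matrix V V ℝ), (∀ a ∈ l, a ∈ Set.range (Rep G)) →
        ∃ L : List (DirSub G), prodMat (L.map (Rep G)) = l.foldr op 0 := by
      intro l
      induction l with
      | nil => exact fun _ => ⟨[], rfl⟩
      | cons a t iht =>
        intro hmem
        obtain ⟨D, rfl⟩ := hmem a (List.mem_cons_self (a := a) (l := t))
        obtain ⟨L, hL⟩ := iht fun x hx => hmem x (List.mem_cons_of_mem _ hx)
        refine ⟨D :: L, ?_⟩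
        show op (Rep G D) (prodMat (List.map (Rep G) L)) = op (Rep G D) (t.foldr op 0)
        rw [hL]
    rintro B ⟨l, hmem, rfl⟩
    exact main l hmem

end GGNN
end

section
/- If G and H are graphs on n vertices and a permutation-induced Change-of-Order mapping f : Mat_n(ℝ) → Mat_n(ℝ) restricts to a monoid isomorphism from Mom(G) onto Mom(H) (with respect to A ∘ B = A + B + AB), then G and H are isomorphic graphs. -/
open Matrix

namespace GGNN

variable {V : Type*} (G : SimpleGraph V)

variable [DecidableEq V]

/-- The permutation matrix of a permutation `σ` of the vertices. -/
def permMat (σ : Equiv.Perm V) : Matrix V V ℝ :=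
  Matrix.of fun i j => if i = σ j then 1 else 0

open scoped Classical in
/-- The elementary matrix with a single `1` at position `(v, w)`. -/
noncomputable def EMat (v w : V) : Matrix V V ℝ :=
  Matrix.of fun i j => if i = v ∧ j = w then 1 else 0

section Aux

variable {G}

/-- A nonempty path whose edges all equal `e`, where `e` is not a loop, is `[e]`. -/
lemma list_eq_single {e : DEdge G} (hne : e.1.1 ≠ e.1.2) {l : List (DEdge G)}
    (h1 : l ≠ []) (h2 : l.Chain' (fun d f => d.1.2 = f.1.1))
    (h3 : ∀ x ∈ l, x = e) : l = [e] := by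
  match l with
  | [] => exact absurd rfl h1
  | [a] => simp [h3 a (by simp)]
  | a :: b :: t =>
      have ha : a = e := h3 a (by simp)
      have hb : b = e := h3 b (by simp)
      rw [List.Chain', List.isChain_cons_cons] at h2
      exact absurd (by rw [ha, hb] at h2; exact h2.1.symm) hne

/-- The single-edge directed subgraph. -/
def singleSub (e : DEdge G) : DirSub G where
  edges := {e}
  connected := by
    intro v w hv hw
    obtain ⟨e', he', hv'⟩ := hv
    obtain ⟨e'', he'', hw'⟩ := hw
    simp only [Finset.mem_singleton] at he' he''
    rw [he'] at hv'
    rw [he''] at hw'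
    have step : Relation.ReflTransGen
        (fun a b => ∃ f ∈ ({e} : Finset (DEdge G)),
          (f.1.1 = a ∧ f.1.2 = b) ∨ (f.1.1 = b ∧ f.1.2 = a)) e.1.1 e.1.2 :=
      Relation.ReflTransGen.single ⟨e, by simp⟩
    have step' : Relation.ReflTransGen
        (fun a b => ∃ f ∈ ({e} : Finset (DEdge G)),
          (f.1.1 = a ∧ f.1.2 = b) ∨ (f.1.1 = b ∧ f.1.2 = a)) e.1.2 e.1.1 :=
      Relation.ReflTransGen.single ⟨e, by simp⟩
    rcases hv' with h1 | h1 <;> rcases hw' with h2 | h2 <;> subst h1 <;> subst h2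
    · exact Relation.ReflTransGen.refl
    · exact step
    · exact step'
    · exact Relation.ReflTransGen.refl
  uniquePath := by
    intro v w l₁ l₂ h₁ h₂ _ _ _ _
    have hne : e.1.1 ≠ e.1.2 := e.2.ne
    rw [list_eq_single hne h₁.1 h₁.2.1 (fun x hx => by
          simpa using h₁.2.2 x hx),
        list_eq_single hne h₂.1 h₂.2.1 (fun x hx => by
          simpa using h₂.2.2 x hx)]
  acyclic := by
    intro v l hl hs he
    have hne : e.1.1 ≠ e.1.2 := e.2.ne
    have hle : l = [e] := list_eq_single hne hl.1 hl.2.1 (fun x hx => by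
      simpa using hl.2.2 x hx)
    subst hle
    obtain ⟨a, ha, ha'⟩ := hs
    obtain ⟨b, hb, hb'⟩ := he
    simp only [List.head?_cons, Option.some.injEq] at ha
    simp only [List.getLast?_singleton, Option.some.injEq] at hb
    subst ha hb
    exact hne (ha'.trans hb'.symm)

lemma reaches_singleSub {e : DEdge G} {a b : V} :
    Reaches G (singleSub e) a b ↔ a = e.1.1 ∧ b = e.1.2 := by
  constructor
  · rintro ⟨l, hl, hs, he⟩
    have hle : l = [e] := list_eq_single e.2.ne hl.1 hl.2.1 (fun x hx => by
      simpa [singleSub] using hl.2.2 x hx)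
    subst hle
    obtain ⟨p, hp, hp'⟩ := hs
    obtain ⟨q, hq, hq'⟩ := he
    simp only [List.head?_cons, Option.some.injEq] at hp
    simp only [List.getLast?_singleton, Option.some.injEq] at hq
    subst hp hq
    exact ⟨hp'.symm, hq'.symm⟩
  · rintro ⟨rfl, rfl⟩
    exact ⟨[e], ⟨by simp, List.isChain_singleton _, by simp [singleSub]⟩, ⟨e, by simp⟩, ⟨e, by simp⟩⟩

lemma rep_singleSub [Fintype V] (e : DEdge G) :
    Rep G (singleSub e) = EMat e.1.1 e.1.2 := by
  ext i j
  simp only [Rep, EMat, Matrix.of_apply]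
  congr 1
  simp [reaches_singleSub, eq_iff_iff]

lemma emat_mem_mom [Fintype V] {v w : V} (hadj : G.Adj v w) : EMat v w ∈ MomSet G := by
  refine ⟨[Rep G (singleSub ⟨(v, w), hadj⟩)], by simp, ?_⟩
  simp [op, rep_singleSub]

lemma mom_nonneg [Fintype V] {l : List (Matrix V V ℝ)}
    (hl : ∀ a ∈ l, a ∈ Set.range (Rep G)) : ∀ i j, 0 ≤ l.foldr op 0 i j := by
  induction l with
  | nil => simp
  | cons A t ih =>
      intro i j
      obtain ⟨D, hD⟩ := hl A (by simp)
      have hA : ∀ i j, (0:ℝ) ≤ A i j := by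
        intro i j; rw [← hD]; simp only [Rep, Matrix.of_apply]; positivity
      have ht := ih (fun a ha => hl a (by simp [ha]))
      simp only [List.foldr_cons, op, Matrix.add_apply, Matrix.mul_apply]
      have : (0:ℝ) ≤ ∑ k, A i k * t.foldr op 0 k j :=
        Finset.sum_nonneg fun k _ => mul_nonneg (hA i k) (ht k j)
      have := ht i j
      have := hA i j
      linarith

lemma adj_of_emat_mem_mom [Fintype V] {v w : V} (hmem : EMat v w ∈ MomSet G) :
    G.Adj v w := by
  obtain ⟨l, hl, hfold⟩ := hmem
  induction l with
  | nil =>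
      exfalso
      have := congrFun (congrFun hfold v) w
      simp [EMat] at this
  | cons A t ih =>
      obtain ⟨D, hD⟩ := hl A (by simp)
      have ht : ∀ a ∈ t, a ∈ Set.range (Rep G) := fun a ha => hl a (by simp [ha])
      by_cases hE : D.edges = ∅
      · -- Rep D = 0, foldr collapses to tail
        apply ih ht
        rw [← hfold]
        have hA0 : A = 0 := by
          rw [← hD]
          ext i j
          simp only [Rep, Matrix.of_apply, Matrix.zero_apply, ite_eq_right_iff]
          rintro ⟨p, ⟨hne, _, hmem'⟩, _⟩
          match p, hne with
          | x :: _, _ => exact absurd (hmem' x (by simp)) (by simp [hE])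
        simp [hA0, op]
      · obtain ⟨e, he⟩ := Finset.nonempty_iff_ne_empty.2 hE
        have hreach : Reaches G D e.1.1 e.1.2 :=
          ⟨[e], ⟨by simp, List.isChain_singleton _, by simpa using he⟩, ⟨e, by simp⟩, ⟨e, by simp⟩⟩
        have hA1 : A e.1.1 e.1.2 = 1 := by rw [← hD]; simp [Rep, hreach]
        have hfe := congrFun (congrFun hfold e.1.1) e.1.2
        have htnn := mom_nonneg ht e.1.1 e.1.2
        have hAnn : ∀ i j, (0:ℝ) ≤ A i j := by
          intro i j; rw [← hD]; simp only [Rep, Matrix.of_apply]; positivity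
        have hprod : (0:ℝ) ≤ ∑ k, A e.1.1 k * t.foldr op 0 k e.1.2 :=
          Finset.sum_nonneg fun k _ => mul_nonneg (hAnn _ _) (mom_nonneg ht _ _)
        simp only [List.foldr_cons, op, Matrix.add_apply, Matrix.mul_apply, hA1] at hfe
        have hposE : (0:ℝ) < EMat v w e.1.1 e.1.2 := by
          rw [← hfe]; linarith
        have heq : e.1.1 = v ∧ e.1.2 = w := by
          by_contra hcon
          simp [EMat, hcon] at hposE
        rw [← heq.1, ← heq.2]
        exact e.2

lemma permMat_transpose (σ : Equiv.Perm V) :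
    (permMat (V := V) σ)ᵀ = permMat σ⁻¹ := by
  ext i j
  simp only [Matrix.transpose_apply, permMat, Matrix.of_apply]
  congr 1
  simp only [eq_iff_iff]
  constructor <;> rintro rfl <;> simp

lemma permMat_conj_emat [Fintype V] (σ : Equiv.Perm V) (v w : V) :
    permMat σ * EMat v w * (permMat (V := V) σ)ᵀ = EMat (σ v) (σ w) := by
  ext i j
  rw [permMat_transpose]
  simp only [Matrix.mul_apply, permMat, EMat, Matrix.of_apply, Finset.sum_mul]
  rw [Finset.sum_comm]
  rw [Finset.sum_eq_single v]
  · rw [Finset.sum_eq_single w]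
    · have hiff : (w = σ⁻¹ j) = (j = σ w) := by
        simp only [eq_iff_iff]; constructor <;> rintro rfl <;> simp
      simp only [hiff]
      by_cases h1 : i = σ v <;> by_cases h2 : j = σ w <;> simp [h1, h2]
    · intro b _ hb
      simp only [mul_ite, mul_one, mul_zero, ite_eq_right_iff, and_imp]
      intro _ _ h
      exact absurd h hb
    · simp
  · intro b _ hb
    apply Finset.sum_eq_zero
    intro k _
    simp only [mul_ite, mul_one, mul_zero, ite_eq_right_iff, and_imp]
    intro _ h
    exact absurd h hb
  · simp

lemma permMat_mul_permMat [Fintype V] (σ τ : Equiv.Perm V) :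
    permMat (V := V) σ * permMat τ = permMat (σ * τ) := by
  ext i j
  simp only [Matrix.mul_apply, permMat, Matrix.of_apply]
  rw [Finset.sum_eq_single (τ j)]
  · simp [Equiv.Perm.mul_apply]
    split_ifs <;> simp_all
  · intro b _ hb
    simp only [mul_ite, mul_one, mul_zero, ite_eq_right_iff]
    intro h
    exact absurd h hb
  · simp

lemma permMat_one [Fintype V] : permMat (V := V) 1 = 1 := by
  ext i j
  simp [permMat, Matrix.one_apply, eq_comm]
  split_ifs <;> simp_all

end Aux

/-- If a Change-of-Order mapping `A ↦ P A Pᵀ` (conjugation by a permutation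
matrix) restricts to a monoid isomorphism from `Mom(G)` onto `Mom(H)`, then
the graphs `G` and `H` are isomorphic. -/
theorem iso_of_changeOfOrder_mom_iso [Fintype V] (H : SimpleGraph V)
    (σ : Equiv.Perm V)
    (h : (fun A => permMat σ * A * (permMat σ)ᵀ) '' MomSet G = MomSet H) :
    Nonempty (G ≃g H) := by
  refine ⟨⟨σ, ?_⟩⟩
  intro a b
  constructor
  · -- H.Adj (σ a) (σ b) → G.Adj a b
    intro hadj
    have hmem : EMat (σ a) (σ b) ∈ MomSet H := emat_mem_mom hadj
    rw [← h] at hmem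
    obtain ⟨M, hM, hMeq⟩ := hmem
    have hPtP : (permMat (V := V) σ)ᵀ * permMat σ = 1 := by
      rw [permMat_transpose, permMat_mul_permMat, inv_mul_cancel, permMat_one]
    replace hMeq : permMat σ * M * (permMat σ)ᵀ = EMat (σ a) (σ b) := hMeq
    have hMval : M = EMat a b := by
      calc M = ((permMat (V := V) σ)ᵀ * permMat σ) * M *
              ((permMat (V := V) σ)ᵀ * permMat σ) := by rw [hPtP]; simp
        _ = (permMat (V := V) σ)ᵀ * (permMat σ * M * (permMat (V := V) σ)ᵀ) *
              permMat σ := by noncomm_ring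
        _ = (permMat (V := V) σ)ᵀ * EMat (σ a) (σ b) * permMat σ := by rw [hMeq]
        _ = permMat σ⁻¹ * EMat (σ a) (σ b) * (permMat (V := V) σ⁻¹)ᵀ := by
              rw [permMat_transpose, permMat_transpose, inv_inv]
        _ = EMat (σ⁻¹ (σ a)) (σ⁻¹ (σ b)) := permMat_conj_emat σ⁻¹ (σ a) (σ b)
        _ = EMat a b := by simp
    rw [hMval] at hM
    exact adj_of_emat_mem_mom hM
  · -- G.Adj a b → H.Adj (σ a) (σ b)
    intro hadj
    have hmem : EMat a b ∈ MomSet G := emat_mem_mom hadj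
    have himg : EMat (σ a) (σ b) ∈ MomSet H := by
      rw [← h]
      exact ⟨EMat a b, hmem, permMat_conj_emat σ a b⟩
    exact adj_of_emat_mem_mom himg

end GGNN
end
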